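/- Let L be a Lie superalgebra over a field k of characteristic 2, i.e., a ℤ/2-graded Lie algebra L = L₀ ⊕ L₁ with a map Q : L₁ → L₀ satisfying Q(λy) = λ²Q(y), Q(y₁+y₂) − Q(y₁) − Q(y₂) = [y₁,y₂], and [Q(y),x] = [y,[y,x]]. Then for every y ∈ L₁, the element C(y) := y² − Q(y) is central in the universal enveloping algebra U(L), and the map y ↦ C(y) satisfies C(y₁+y₂) = C(y₁) + C(y₂) and C(λy) = λ²C(y). -/

import Mathlib

open UniversalEnvelopingAlgebra

section Aux

variable (k : Type*) [Field k] [CharP k 2]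

lemma aux_two_eq_zero {M : Type*} [AddCommGroup M] [Module k M] (a : M) :
    a + a = 0 := by
  have h : ((2 : k)) • a = a + a := two_smul k a
  have h2 : (2 : k) = 0 := by
    have := CharP.cast_eq_zero k 2
    simpa using this
  rw [h2, zero_smul] at h
  exact h.symm

lemma aux_neg_eq {M : Type*} [AddCommGroup M] [Module k M] (a : M) :
    -a = a := by
  rw [neg_eq_iff_add_eq_zero, aux_two_eq_zero k]

lemma aux_lie_comm {L : Type*} [LieRing L] [LieAlgebra k L] (x y : L) :
    ⁅x, y⁆ = ⁅y, x⁆ := by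
  rw [← lie_skew, aux_neg_eq k]

variable (L : Type*) [LieRing L] [LieAlgebra k L]

lemma aux_swap (x y : L) :
    ι k x * ι k y = ι k ⁅x, y⁆ + ι k y * ι k x := by
  letI : LieRing (UniversalEnvelopingAlgebra k L) := LieRing.ofAssociativeRing
  rw [LieHom.map_lie, Ring.lie_def, sub_add_cancel]

lemma aux_central (z : UniversalEnvelopingAlgebra k L)
    (h : ∀ x : L, ι k x * z = z * ι k x) :
    ∀ u : UniversalEnvelopingAlgebra k L, u * z = z * u := by
  intro u
  have hs : Function.Surjective (mkAlgHom k L) :=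
    RingCon.mkₐ_surjective (α := k) (ringCon k L)
  obtain ⟨t, rfl⟩ := hs u
  induction t using TensorAlgebra.induction with
  | algebraMap r =>
      rw [AlgHom.commutes]
      exact Algebra.commutes r z
  | ι x =>
      have hx : mkAlgHom k L (TensorAlgebra.ι k x) = ι k x := rfl
      rw [hx, h]
  | mul a b ha hb => rw [map_mul, mul_assoc, hb, ← mul_assoc, ha, mul_assoc]
  | add a b ha hb => rw [map_add, add_mul, mul_add, ha, hb]

end Aux

/-- Let `L = L₀ ⊕ L₁` be a Lie superalgebra over a field `k` of
characteristic 2: a ℤ/2-graded Lie algebra with a squaring map `Q : L₁ → L₀`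
satisfying `Q(λy) = λ²Q(y)`, `Q(y₁+y₂) − Q(y₁) − Q(y₂) = [y₁,y₂]` and
`[Q(y),x] = [y,[y,x]]`.  Then for every `y ∈ L₁` the element `C(y) := y² − Q(y)` of
`U(L)` is central, and `C` is additive and satisfies `C(λy) = λ²C(y)` on `L₁`. -/
theorem stmt12 (k : Type*) [Field k] [CharP k 2]
    (L : Type*) [LieRing L] [LieAlgebra k L]
    (L₀ L₁ : Submodule k L) (hcompl : IsCompl L₀ L₁)
    (h00 : ∀ x ∈ L₀, ∀ y ∈ L₀, ⁅x, y⁆ ∈ L₀)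
    (h01 : ∀ x ∈ L₀, ∀ y ∈ L₁, ⁅x, y⁆ ∈ L₁)
    (h11 : ∀ x ∈ L₁, ∀ y ∈ L₁, ⁅x, y⁆ ∈ L₀)
    (Q : L → L)
    (hQmap : ∀ y ∈ L₁, Q y ∈ L₀)
    (hQsmul : ∀ (c : k), ∀ y ∈ L₁, Q (c • y) = (c ^ 2) • Q y)
    (hQadd : ∀ y₁ ∈ L₁, ∀ y₂ ∈ L₁, Q (y₁ + y₂) - Q y₁ - Q y₂ = ⁅y₁, y₂⁆)
    (hQbr : ∀ y ∈ L₁, ∀ x : L, ⁅Q y, x⁆ = ⁅y, ⁅y, x⁆⁆) :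
    (∀ y ∈ L₁, ∀ u : UniversalEnvelopingAlgebra k L,
      u * (ι k y * ι k y - ι k (Q y)) = (ι k y * ι k y - ι k (Q y)) * u) ∧
    (∀ y₁ ∈ L₁, ∀ y₂ ∈ L₁,
      ι k (y₁ + y₂) * ι k (y₁ + y₂) - ι k (Q (y₁ + y₂)) =
        (ι k y₁ * ι k y₁ - ι k (Q y₁)) + (ι k y₂ * ι k y₂ - ι k (Q y₂))) ∧
    (∀ (c : k), ∀ y ∈ L₁,
      ι k (c • y) * ι k (c • y) - ι k (Q (c • y)) =
        (c ^ 2) • (ι k y * ι k y - ι k (Q y))) := by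
  refine ⟨?_, ?_, ?_⟩
  · -- centrality
    intro y hy u
    apply aux_central k L
    intro x
    have h1 : ι k x * ι k y = ι k ⁅x, y⁆ + ι k y * ι k x := aux_swap k L x y
    have h2 : ι k ⁅x, y⁆ * ι k y = ι k ⁅⁅x, y⁆, y⁆ + ι k y * ι k ⁅x, y⁆ :=
      aux_swap k L ⁅x, y⁆ y
    have hl : ⁅⁅x, y⁆, y⁆ = ⁅y, ⁅y, x⁆⁆ := by
      rw [aux_lie_comm k ⁅x, y⁆ y, aux_lie_comm k x y]
    have key : ι k x * (ι k y * ι k y) =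
        ι k y * ι k y * ι k x + ι k ⁅y, ⁅y, x⁆⁆ := by
      calc ι k x * (ι k y * ι k y) = ι k x * ι k y * ι k y := by rw [mul_assoc]
        _ = (ι k ⁅x, y⁆ + ι k y * ι k x) * ι k y := by rw [h1]
        _ = ι k ⁅x, y⁆ * ι k y + ι k y * (ι k x * ι k y) := by
              rw [add_mul, mul_assoc]
        _ = (ι k ⁅⁅x, y⁆, y⁆ + ι k y * ι k ⁅x, y⁆) +
              (ι k y * ι k ⁅x, y⁆ + ι k y * (ι k y * ι k x)) := by
              rw [h2, h1, mul_add]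
        _ = ι k ⁅⁅x, y⁆, y⁆ + (ι k y * ι k ⁅x, y⁆ + ι k y * ι k ⁅x, y⁆) +
              ι k y * ι k y * ι k x := by rw [mul_assoc]; abel
        _ = ι k y * ι k y * ι k x + ι k ⁅y, ⁅y, x⁆⁆ := by
              rw [aux_two_eq_zero k, hl]; abel
    have keyQ : ι k x * ι k (Q y) = ι k (Q y) * ι k x + ι k ⁅y, ⁅y, x⁆⁆ := by
      rw [aux_swap k L x (Q y), aux_lie_comm k x (Q y), hQbr y hy x]
      exact add_comm _ _
    rw [mul_sub, sub_mul, key, keyQ]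
    abel
  · -- additivity
    intro y₁ h1 y₂ h2
    have hQ : Q (y₁ + y₂) = ⁅y₁, y₂⁆ + Q y₁ + Q y₂ := by
      have h := hQadd y₁ h1 y₂ h2
      rw [sub_sub, sub_eq_iff_eq_add] at h
      rw [h]; abel
    have hsw : ι k y₂ * ι k y₁ = ι k ⁅y₁, y₂⁆ + ι k y₁ * ι k y₂ := by
      rw [aux_lie_comm k y₁ y₂]; exact aux_swap k L y₂ y₁
    rw [hQ, map_add (ι k), map_add (ι k), map_add (ι k)]
    rw [add_mul, mul_add, mul_add, hsw]
    rw [sub_eq_add_neg, sub_eq_add_neg, sub_eq_add_neg, aux_neg_eq k, aux_neg_eq k,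
      aux_neg_eq k]
    calc ι k y₁ * ι k y₁ + ι k y₁ * ι k y₂ +
          (ι k ⁅y₁, y₂⁆ + ι k y₁ * ι k y₂ + ι k y₂ * ι k y₂) +
          (ι k ⁅y₁, y₂⁆ + ι k (Q y₁) + ι k (Q y₂))
        = ι k y₁ * ι k y₁ + ι k (Q y₁) + (ι k y₂ * ι k y₂ + ι k (Q y₂)) +
          ((ι k y₁ * ι k y₂ + ι k y₁ * ι k y₂) + (ι k ⁅y₁, y₂⁆ + ι k ⁅y₁, y₂⁆)) := by abel
      _ = _ := by rw [aux_two_eq_zero k, aux_two_eq_zero k]; abel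
  · -- smul
    intro c y hy
    rw [hQsmul c y hy, map_smul (ι k), map_smul (ι k), smul_mul_smul_comm, ← pow_two,
      smul_sub]
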